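/- If G is a graph with no isolated vertices and γ_tR(G) = k ≥ 4, then G is a spanning subgraph of a graph H with γ_tR(H) = k such that γ_tR(H+e) < k for every edge e of the nonempty complement of H. -/

import Mathlib

/-- A total Roman dominating function: values in {0,1,2}, every vertex with value 0
has a neighbour with value 2, and vertices with positive value are not isolated in
the induced subgraph of positive-value vertices. -/
def TRDF {V : Type*} (G : SimpleGraph V) (f : V → ℕ) : Prop :=
  (∀ v, f v ≤ 2) ∧
  (∀ v, f v = 0 → ∃ u, G.Adj v u ∧ f u = 2) ∧
  (∀ v, 0 < f v → ∃ u, G.Adj v u ∧ 0 < f u)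

/-- The total Roman domination number. -/
noncomputable def trdn {V : Type*} [Fintype V] (G : SimpleGraph V) : ℕ :=
  sInf {w | ∃ f : V → ℕ, TRDF G f ∧ w = ∑ v, f v}

/-- The graph `G + uv`. -/
def addEdge {V : Type*} (G : SimpleGraph V) (u v : V) : SimpleGraph V :=
  G ⊔ SimpleGraph.fromEdgeSet {s(u, v)}

/-- `G` has no isolated vertices. -/
def NoIsolated {V : Type*} (G : SimpleGraph V) : Prop := ∀ v, ∃ u, G.Adj v u

lemma TRDF.mono {V : Type*} {G H : SimpleGraph V} (hle : G ≤ H) {f : V → ℕ}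
    (hf : TRDF G f) : TRDF H f := by
  obtain ⟨h1, h2, h3⟩ := hf
  refine ⟨h1, fun v hv => ?_, fun v hv => ?_⟩
  · obtain ⟨u, hu, hu2⟩ := h2 v hv
    exact ⟨u, hle hu, hu2⟩
  · obtain ⟨u, hu, hu2⟩ := h3 v hv
    exact ⟨u, hle hu, hu2⟩

lemma trdf_set_nonempty {V : Type*} [Fintype V] {G : SimpleGraph V} (hiso : NoIsolated G) :
    {w | ∃ f : V → ℕ, TRDF G f ∧ w = ∑ v, f v}.Nonempty := by
  refine ⟨∑ v : V, 2, fun _ => 2, ⟨fun v => le_refl _, fun v hv => by simp at hv, fun v _ => ?_⟩, rfl⟩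
  obtain ⟨u, hu⟩ := hiso v
  exact ⟨u, hu, by norm_num⟩

lemma trdn_anti {V : Type*} [Fintype V] {G H : SimpleGraph V} (hiso : NoIsolated G)
    (hle : G ≤ H) : trdn H ≤ trdn G := by
  obtain ⟨f, hf, hw⟩ := Nat.sInf_mem (trdf_set_nonempty hiso)
  exact le_trans (Nat.sInf_le ⟨f, hf.mono hle, hw⟩) (le_refl _)

theorem stmt17 {V : Type*} [Fintype V] (G : SimpleGraph V) (hiso : NoIsolated G)
    (k : ℕ) (hk : 4 ≤ k) (hG : trdn G = k) :
    ∃ H : SimpleGraph V, G ≤ H ∧ trdn H = k ∧ (∃ u v, Hᶜ.Adj u v) ∧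
      ∀ u v, Hᶜ.Adj u v → trdn (addEdge H u v) < k := by
  classical
  set S : Set (SimpleGraph V) := {H | G ≤ H ∧ trdn H = k} with hS
  have hSne : S.Nonempty := ⟨G, le_refl _, hG⟩
  obtain ⟨H, hHS, hmax⟩ : ∃ a ∈ S, ∀ a' ∈ S, id a ≤ id a' → id a = id a' := by
    obtain ⟨i, hi⟩ := (Set.toFinite S).exists_maximal hSne
    exact ⟨i, hi.1, fun a' ha' hle => hi.eq_of_le ha' hle⟩
  obtain ⟨hGH, hHk⟩ := hHS
  refine ⟨H, hGH, hHk, ?_, ?_⟩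
  · -- complement nonempty: otherwise H = ⊤ and trdn H ≤ 3 < k
    by_contra hne
    push_neg at hne
    have hTop : H = ⊤ := by
      ext u v
      simp only [SimpleGraph.top_adj]
      constructor
      · exact fun h => h.ne
      · intro huv
        by_contra hadj
        exact hne u v ((SimpleGraph.compl_adj _ _ _).mpr ⟨huv, hadj⟩)
    -- two distinct vertices
    have hV : Nonempty V := by
      by_contra h
      rw [not_nonempty_iff] at h
      have h0 : trdn G ≤ 0 := Nat.sInf_le ⟨fun _ => 0,
        ⟨fun v => (h.false v).elim, fun v => (h.false v).elim, fun v => (h.false v).elim⟩,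
        by simp⟩
      omega
    obtain ⟨b, hb⟩ := hiso (Classical.arbitrary V)
    set a := Classical.arbitrary V
    have hab : a ≠ b := hb.ne
    -- f : a ↦ 2, b ↦ 1
    set f : V → ℕ := fun v => if v = a then 2 else if v = b then 1 else 0 with hf
    have hTRDF : TRDF H f := by
      rw [hTop]
      refine ⟨fun v => ?_, fun v hv => ?_, fun v hv => ?_⟩
      · simp only [hf]; split_ifs <;> omega
      · refine ⟨a, ?_, ?_⟩
        · simp only [SimpleGraph.top_adj]
          intro h; subst h; simp [hf] at hv
        · simp [hf]
      · by_cases hva : v = a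
        · refine ⟨b, ?_, ?_⟩
          · simp [SimpleGraph.top_adj, hva, hab]
          · simp [hf, (hab.symm : b ≠ a), hab]
        · refine ⟨a, ?_, ?_⟩
          · simp [SimpleGraph.top_adj, hva]
          · simp [hf]
    have hsum : ∑ v, f v ≤ 3 := by
      have : ∑ v, f v = ∑ v ∈ ({a, b} : Finset V), f v := by
        refine (Finset.sum_subset (Finset.subset_univ _) ?_).symm
        intro x _ hx
        simp only [Finset.mem_insert, Finset.mem_singleton, not_or] at hx
        simp [hf, hx.1, hx.2]
      rw [this, Finset.sum_pair hab]
      simp [hf, hab, (hab.symm : b ≠ a)]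
    have hle3 : trdn H ≤ 3 := le_trans (Nat.sInf_le ⟨f, hTRDF, rfl⟩) hsum
    omega
  · intro u v huv
    obtain ⟨hne, hnadj⟩ := (SimpleGraph.compl_adj _ _ _).mp huv
    have hle : H ≤ addEdge H u v := le_sup_left
    have hlt : trdn (addEdge H u v) ≤ k := by
      rw [← hHk]
      exact trdn_anti (fun w => (hiso w).imp (fun x hx => hGH hx)) hle
    rcases lt_or_eq_of_le hlt with h | h
    · exact h
    · exfalso
      have hmem : addEdge H u v ∈ S := ⟨le_trans hGH hle, h⟩
      have := hmax _ hmem hle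
      have hadj : (addEdge H u v).Adj u v := by
        apply le_sup_right (b := SimpleGraph.fromEdgeSet {s(u, v)})
        simp [SimpleGraph.fromEdgeSet_adj, hne]
      rw [id, id] at this
      rw [← this] at hadj
      exact hnadj hadj
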